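/- In the general linear rotation setting, if the R-matrix Ř_VV(u) (satisfying the Yang–Baxter equation and the inversion relation Ř_VV(u)Ř_VV(−u) = Id) is crossing symmetric with crossing parameter λ and meromorphic function α, then the inversion identities Ř_{VV*}(−u)Ř_{V*V}(u) = α(u)·Id_{V*⊗V} and Ř_{V*V}(u)Ř_{VV*}(−u) = α(u)·Id_{V⊗V*} hold for generic u. -/
import Mathlib


open CategoryTheory
open scoped BigOperators

namespace Stmt5

variable {C : Type} [Groupoid C] [Fintype C] [DecidableEq C]
  [∀ a b : C, Fintype (a ⟶ b)] [∀ a b : C, DecidableEq (a ⟶ b)]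

/-- The set of arrows of the groupoid `C`. -/
abbrev Arr (C : Type) [Groupoid C] := Σ a b : C, a ⟶ b

def src (α : Arr C) : C := α.1
def tgt (α : Arr C) : C := α.2.1
/-- inverse arrow -/
def ainv (α : Arr C) : Arr C := ⟨α.2.1, α.1, Groupoid.inv α.2.2⟩
/-- composition of composable arrows -/
def acomp (α β : Arr C) (h : tgt α = src β) : Arr C :=
  ⟨src α, tgt β, α.2.2 ≫ eqToHom h ≫ β.2.2⟩

/-- `IsSquare i j k l` : the arrows `i,j` (vertically composable) and `k,l` (vertically
composable) form a commutative square, i.e. `j∘i = l∘k` with matching endpoints. -/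
def IsSquare (i j k l : Arr C) : Prop :=
  ∃ (h₁ : tgt i = src j) (h₂ : tgt k = src l),
    src i = src k ∧ tgt j = tgt l ∧ acomp i j h₁ = acomp k l h₂

variable {ι : Type} [Fintype ι] [DecidableEq ι]

/-!  π-graded vector spaces of finite type are encoded by a finite basis index type `ι`
with a degree map `deg : ι → Arr C`; the vector `e a` (a basis vector of `V`) has degree
`deg a`, and the dual basis vector `f a` of the dual space `V*` has degree `(deg a)⁻¹`.
Operators are encoded by their matrices in these bases.  Since `V` and `V*` share the
index type `ι`, all the operators `Ř_{VV}, Ř_{V*V}, Ř_{VV*}, Ř_{V*V*}` are matrices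
indexed by `ι × ι`.

The general linear rotation data consists of
* `ω  : V ⊗ V* → 𝟏`, with matrix `ω a b` (coefficient on `e a ⊗ f b`),
* `σm : 𝟏 → V* ⊗ V`, with coefficients `σm a b` (on `f a ⊗ e b`),
* `ωs : V* ⊗ V → 𝟏`, with matrix `ωs a b` (on `f a ⊗ e b`),
* `σs : 𝟏 → V ⊗ V*`, with coefficients `σs a b` (on `e a ⊗ f b`),
* a function `G` on the objects of the groupoid. -/

/-- A matrix (on any of the four twofold tensor products) is a π-graded morphism iff its
entries are supported on commutative squares.  Convention: `R p q` is the matrix element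
from the `q = (q.1, q.2)` component to the `p = (p.1, p.2)` component. -/
def GradedR (deg : ι → Arr C) (R : Matrix (ι × ι) (ι × ι) ℂ) : Prop :=
  ∀ p q, R p q ≠ 0 → IsSquare (deg q.1) (deg q.2) (deg p.1) (deg p.2)

/-- operator acting on the factors 1,2 of a threefold tensor product. -/
noncomputable def M12 (R : Matrix (ι × ι) (ι × ι) ℂ) :
    Matrix (ι × ι × ι) (ι × ι × ι) ℂ :=
  fun p q => R (p.1, p.2.1) (q.1, q.2.1) * (if p.2.2 = q.2.2 then 1 else 0)

/-- operator acting on the factors 2,3 of a threefold tensor product. -/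
noncomputable def M23 (R : Matrix (ι × ι) (ι × ι) ℂ) :
    Matrix (ι × ι × ι) (ι × ι × ι) ℂ :=
  fun p q => (if p.1 = q.1 then 1 else 0) * R (p.2.1, p.2.2) (q.2.1, q.2.2)

/-- `Ř_{VV*}(u) := (id⊗id⊗ω)(id⊗Ř_VV(λ−u)⊗id)(σ⊗id⊗id) : V⊗V* → V*⊗V`
(rotation by 90°), written for a family `F` in place of `Ř_VV`. -/
noncomputable def rotHead (ω σm : ι → ι → ℂ) (F : ℂ → Matrix (ι × ι) (ι × ι) ℂ)
    (lam u : ℂ) : Matrix (ι × ι) (ι × ι) ℂ :=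
  fun p q => ∑ b : ι, ∑ m : ι, σm p.1 b * F (lam - u) (p.2, m) (b, q.1) * ω m q.2

/-- `Ř_{V*V}(u) := (ω*⊗id⊗id)(id⊗Ř_VV(λ−u)⊗id)(id⊗id⊗σ*) : V*⊗V → V⊗V*`
(rotation by −90°), written for a family `F` in place of `Ř_VV`. -/
noncomputable def rotTail (ωs σs : ι → ι → ℂ) (F : ℂ → Matrix (ι × ι) (ι × ι) ℂ)
    (lam u : ℂ) : Matrix (ι × ι) (ι × ι) ℂ :=
  fun p q => ∑ c : ι, ∑ m : ι, ωs q.1 m * F (lam - u) (m, p.1) (q.2, c) * σs c p.2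

/-- `Ř_{VV*}(u) : V⊗V* → V*⊗V`, the rotation by 90° of `Ř_VV`. -/
noncomputable def RVVs (ω σm : ι → ι → ℂ) (Rm : ℂ → Matrix (ι × ι) (ι × ι) ℂ)
    (lam u : ℂ) : Matrix (ι × ι) (ι × ι) ℂ := rotHead ω σm Rm lam u

/-- `Ř_{V*V}(u) : V*⊗V → V⊗V*`, the rotation by −90° of `Ř_VV`. -/
noncomputable def RVsV (ωs σs : ι → ι → ℂ) (Rm : ℂ → Matrix (ι × ι) (ι × ι) ℂ)
    (lam u : ℂ) : Matrix (ι × ι) (ι × ι) ℂ := rotTail ωs σs Rm lam u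

/-- `Ř_{V*V*}(u) := (id⊗id⊗ω)(id⊗Ř_{VV*}(λ−u)⊗id)(σ⊗id⊗id) : V*⊗V* → V*⊗V*`,
the rotation by 180° of `Ř_VV`. -/
noncomputable def RVsVs (ω σm : ι → ι → ℂ) (Rm : ℂ → Matrix (ι × ι) (ι × ι) ℂ)
    (lam u : ℂ) : Matrix (ι × ι) (ι × ι) ℂ :=
  rotHead ω σm (fun v => RVVs ω σm Rm lam v) lam u

/-- the map `ω : V⊗V* → 𝟏` contracting the factors 2,3 of a threefold tensor product. -/
noncomputable def Om23 (ω : ι → ι → ℂ) : Matrix ι (ι × ι × ι) ℂ :=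
  fun a q => (if a = q.1 then 1 else 0) * ω q.2.1 q.2.2

/-- the map `ω : V⊗V* → 𝟏` contracting the factors 1,2 of a threefold tensor product. -/
noncomputable def Om12 (ω : ι → ι → ℂ) : Matrix ι (ι × ι × ι) ℂ :=
  fun a q => ω q.1 q.2.1 * (if a = q.2.2 then 1 else 0)

/-- the map `σ : 𝟏 → V*⊗V` inserted in the factors 1,2. -/
noncomputable def Sg12 (σ : ι → ι → ℂ) : Matrix (ι × ι × ι) ι ℂ :=
  fun p a => σ p.1 p.2.1 * (if p.2.2 = a then 1 else 0)

/-- the map `σ : 𝟏 → V*⊗V` inserted in the factors 2,3. -/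
noncomputable def Sg23 (σ : ι → ι → ℂ) : Matrix (ι × ι × ι) ι ℂ :=
  fun p a => (if p.1 = a then 1 else 0) * σ p.2.1 p.2.2


set_option linter.unusedSectionVars false in
lemma sum_swap3 {M : Type*} [AddCommMonoid M] (f : ι → ι → ι → M) :
    ∑ x, ∑ y, ∑ b, f x y b = ∑ b, ∑ x, ∑ y, f x y b := by
  calc ∑ x, ∑ y, ∑ b, f x y b = ∑ x, ∑ b, ∑ y, f x y b :=
        Finset.sum_congr rfl fun x _ => Finset.sum_comm
    _ = ∑ b, ∑ x, ∑ y, f x y b := Finset.sum_comm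

lemma first_id (Rm : ℂ → Matrix (ι × ι) (ι × ι) ℂ)
    (ω σm ωs σs : ι → ι → ℂ) (lam u : ℂ) (α : ℂ → ℂ)
    (hzig1 : ∀ a c, (∑ b, σm a b * ω b c) = if a = c then (1 : ℂ) else 0)
    (H1 : Om23 ω * M12 (Rm (u + lam)) * M23 (RVsV ωs σs Rm lam u) = α u • Om12 ω) :
    RVVs ω σm Rm lam (-u) * RVsV ωs σs Rm lam u = α u • (1 : Matrix (ι × ι) (ι × ι) ℂ) := by
  have h1 : ∀ a b q1 q2 : ι,
      ∑ x : ι, ∑ x1 : ι, (∑ x2 : ι, ω x2 x1 * Rm (u + lam) (a, x2) (b, x)) *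
        RVsV ωs σs Rm lam u (x, x1) (q1, q2)
      = α u * (ω b q1 * if a = q2 then (1:ℂ) else 0) := by
    intro a b q1 q2
    have := congrFun (congrFun H1 a) (b, q1, q2)
    simpa [Om23, Om12, M12, M23, Matrix.mul_apply, Fintype.sum_prod_type, mul_ite, ite_mul,
      mul_one, mul_zero, one_mul, zero_mul, Finset.sum_ite_eq, Finset.sum_ite_eq',
      Matrix.smul_apply, smul_eq_mul] using this
  ext ⟨p1, p2⟩ ⟨q1, q2⟩
  rw [Matrix.mul_apply]
  have hl : lam - -u = u + lam := by ring
  simp only [RVVs, rotHead, hl, Matrix.smul_apply, Matrix.one_apply, smul_eq_mul]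
  calc
    ∑ j : ι × ι, (∑ b, ∑ m, σm p1 b * Rm (u + lam) (p2, m) (b, j.1) * ω m j.2) *
        RVsV ωs σs Rm lam u j (q1, q2)
      = ∑ b, σm p1 b * (∑ x, ∑ x1, (∑ x2, ω x2 x1 * Rm (u + lam) (p2, x2) (b, x)) *
          RVsV ωs σs Rm lam u (x, x1) (q1, q2)) := by
        simp only [Finset.sum_mul, Finset.mul_sum, Fintype.sum_prod_type]
        rw [sum_swap3]
        refine Finset.sum_congr rfl fun b _ => Finset.sum_congr rfl fun x _ =>
          Finset.sum_congr rfl fun x1 _ => Finset.sum_congr rfl fun m _ => ?_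
        ring
    _ = ∑ b, σm p1 b * (α u * (ω b q1 * if p2 = q2 then (1:ℂ) else 0)) := by
        exact Finset.sum_congr rfl fun b _ => by rw [h1]
    _ = α u * (if (p1, p2) = (q1, q2) then (1:ℂ) else 0) := by
        have : ∑ b, σm p1 b * (α u * (ω b q1 * if p2 = q2 then (1:ℂ) else 0))
            = (α u * if p2 = q2 then (1:ℂ) else 0) * ∑ b, σm p1 b * ω b q1 := by
          rw [Finset.mul_sum]
          exact Finset.sum_congr rfl fun b _ => by ring
        rw [this, hzig1]
        by_cases h1' : p1 = q1 <;> by_cases h2' : p2 = q2 <;>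
          simp [Prod.ext_iff, h1', h2']

set_option linter.unusedSectionVars false in
lemma sum_swap4 {M : Type*} [AddCommMonoid M] (f : ι → ι → ι → ι → M) :
    ∑ x, ∑ y, ∑ z, ∑ w, f x y z w = ∑ w, ∑ x, ∑ y, ∑ z, f x y z w := by
  calc ∑ x, ∑ y, ∑ z, ∑ w, f x y z w
      = ∑ x, ∑ y, ∑ w, ∑ z, f x y z w :=
        Finset.sum_congr rfl fun x _ => Finset.sum_congr rfl fun y _ => Finset.sum_comm
    _ = ∑ x, ∑ w, ∑ y, ∑ z, f x y z w :=
        Finset.sum_congr rfl fun x _ => Finset.sum_comm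
    _ = ∑ w, ∑ x, ∑ y, ∑ z, f x y z w := Finset.sum_comm

lemma second_id (Rm : ℂ → Matrix (ι × ι) (ι × ι) ℂ)
    (ω σm ωs σs : ι → ι → ℂ) (lam u : ℂ) (α : ℂ → ℂ)
    (hzig1 : ∀ a c, (∑ b, σm a b * ω b c) = if a = c then (1 : ℂ) else 0)
    (H2 : M12 (RVsV ωs σs Rm lam u) * M23 (Rm (u + lam)) * Sg12 σm = α u • Sg23 σm) :
    RVsV ωs σs Rm lam u * RVVs ω σm Rm lam (-u) = α u • (1 : Matrix (ι × ι) (ι × ι) ℂ) := by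
  have h2 : ∀ p1 p2 p3 a : ι,
      ∑ x : ι, ∑ x1 : ι, (∑ x2 : ι, RVsV ωs σs Rm lam u (p1, p2) (x, x2) *
          Rm (u + lam) (x2, p3) (x1, a)) * σm x x1
      = α u * ((if p1 = a then (1:ℂ) else 0) * σm p2 p3) := by
    intro p1 p2 p3 a
    have := congrFun (congrFun H2 (p1, p2, p3)) a
    simpa [Sg12, Sg23, M12, M23, Matrix.mul_apply, Fintype.sum_prod_type, mul_ite, ite_mul,
      mul_one, mul_zero, one_mul, zero_mul, Finset.sum_ite_eq, Finset.sum_ite_eq',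
      Matrix.smul_apply, smul_eq_mul] using this
  ext ⟨p1, p2⟩ ⟨q1, q2⟩
  rw [Matrix.mul_apply]
  have hl : lam - -u = u + lam := by ring
  simp only [RVVs, rotHead, hl, Matrix.smul_apply, Matrix.one_apply, smul_eq_mul]
  calc
    ∑ j : ι × ι, RVsV ωs σs Rm lam u (p1, p2) j *
        (∑ b, ∑ n, σm j.1 b * Rm (u + lam) (j.2, n) (b, q1) * ω n q2)
      = ∑ n, (∑ x, ∑ x1, (∑ x2, RVsV ωs σs Rm lam u (p1, p2) (x, x2) *
          Rm (u + lam) (x2, n) (x1, q1)) * σm x x1) * ω n q2 := by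
        simp only [Finset.mul_sum, Finset.sum_mul, Fintype.sum_prod_type]
        rw [sum_swap4 (fun x y z w => RVsV ωs σs Rm lam u (p1, p2) (x, y) *
          (σm x z * Rm (u + lam) (y, w) (z, q1) * ω w q2))]
        refine Finset.sum_congr rfl fun n _ => Finset.sum_congr rfl fun x _ => ?_
        rw [Finset.sum_comm]
        refine Finset.sum_congr rfl fun x1 _ => Finset.sum_congr rfl fun x2 _ => ?_
        ring
    _ = ∑ n, (α u * ((if p1 = q1 then (1:ℂ) else 0) * σm p2 n)) * ω n q2 := by
        exact Finset.sum_congr rfl fun n _ => by rw [h2]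
    _ = α u * (if (p1, p2) = (q1, q2) then (1:ℂ) else 0) := by
        have : ∑ n, (α u * ((if p1 = q1 then (1:ℂ) else 0) * σm p2 n)) * ω n q2
            = (α u * if p1 = q1 then (1:ℂ) else 0) * ∑ n, σm p2 n * ω n q2 := by
          rw [Finset.mul_sum]
          exact Finset.sum_congr rfl fun n _ => by ring
        rw [this, hzig1]
        by_cases h1' : p1 = q1 <;> by_cases h2' : p2 = q2 <;>
          simp [Prod.ext_iff, h1', h2']

/-- inversion identities:  in the general linear rotation setting, if
the R-matrix `Ř_VV(u)` (satisfying the Yang–Baxter equation and the inversion relation)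
is crossing symmetric with crossing parameter `λ` and meromorphic function `α`, then
`Ř_{VV*}(−u)Ř_{V*V}(u) = α(u)·Id_{V*⊗V}` and `Ř_{V*V}(u)Ř_{VV*}(−u) = α(u)·Id_{V⊗V*}`
for generic `u`. -/
theorem inversion_identities
    (deg : ι → Arr C) (Rm : ℂ → Matrix (ι × ι) (ι × ι) ℂ)
    (ω σm ωs σs : ι → ι → ℂ) (G : C → ℂ) (lam : ℂ) (α : ℂ → ℂ)
    -- each `Ř_VV(u)` is a morphism of π-graded vector spaces,
    -- with meromorphic matrix entries; α is meromorphic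
    (hRgr : ∀ u, GradedR deg (Rm u))
    (hMero : ∀ p q, MeromorphicOn (fun u => Rm u p q) Set.univ)
    (hαMero : MeromorphicOn α Set.univ)
    -- grading supports of the duality data
    (hωgr : ∀ a b, ω a b ≠ 0 → deg b = deg a)
    (hσgr : ∀ a b, σm a b ≠ 0 → deg b = deg a)
    (hωsgr : ∀ a b, ωs a b ≠ 0 → deg b = deg a)
    (hσsgr : ∀ a b, σs a b ≠ 0 → deg b = deg a)
    -- ω nondegenerate with dual σ
    (hzig1 : ∀ a c, (∑ b, σm a b * ω b c) = if a = c then (1 : ℂ) else 0)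
    (hzig2 : ∀ a c, (∑ b, ω a b * σm b c) = if a = c then (1 : ℂ) else 0)
    -- G with values in ℂ^×, defining ω*
    (hG : ∀ x, G x ≠ 0)
    (hωs : ∀ a b, ωs a b = G (src (deg a)) / G (tgt (deg a)) * ω b a)
    -- σ* dual to ω*
    (hzig3 : ∀ a c, (∑ b, σs a b * ωs b c) = if a = c then (1 : ℂ) else 0)
    (hzig4 : ∀ a c, (∑ b, ωs a b * σs b c) = if a = c then (1 : ℂ) else 0)
    -- exceptional set of non-generic parameters
    (E : Set ℂ) (hE : E.Countable)
    -- `Ř_VV` satisfies the Yang–Baxter equation and the inversion relation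
    (hYBE : ∀ u v : ℂ, u ∉ E → v ∉ E → u - v ∉ E →
      M23 (Rm (u - v)) * M12 (Rm u) * M23 (Rm v)
        = M12 (Rm v) * M23 (Rm u) * M12 (Rm (u - v)))
    (hinv : ∀ u : ℂ, u ∉ E → -u ∉ E → Rm u * Rm (-u) = 1)
    -- crossing symmetry (general linear form):
    -- ω^{(23)} Ř_VV^{(12)}(u+λ) Ř_{V*V}^{(23)}(u) = α(u) ω^{(12)}
    (hcross1 : ∀ u : ℂ, u ∉ E → u + lam ∉ E →
      Om23 ω * M12 (Rm (u + lam)) * M23 (RVsV ωs σs Rm lam u) = α u • Om12 ω)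
    -- Ř_{V*V}^{(12)}(u) Ř_VV^{(23)}(u+λ) σ^{(12)} = α(u) σ^{(23)}
    (hcross2 : ∀ u : ℂ, u ∉ E → u + lam ∉ E →
      M12 (RVsV ωs σs Rm lam u) * M23 (Rm (u + lam)) * Sg12 σm = α u • Sg23 σm) :
    ∃ E' : Set ℂ, E'.Countable ∧
      ∀ u ∉ E',
        RVVs ω σm Rm lam (-u) * RVsV ωs σs Rm lam u = α u • (1 : Matrix (ι × ι) (ι × ι) ℂ)
        ∧ RVsV ωs σs Rm lam u * RVVs ω σm Rm lam (-u)
            = α u • (1 : Matrix (ι × ι) (ι × ι) ℂ) := by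
  refine ⟨E ∪ (· + lam) ⁻¹' E, hE.union (hE.preimage (add_left_injective lam)), ?_⟩
  intro u hu
  have hu1 : u ∉ E := fun h => hu (Or.inl h)
  have hu2 : u + lam ∉ E := fun h => hu (Or.inr h)
  exact ⟨first_id Rm ω σm ωs σs lam u α hzig1 (hcross1 u hu1 hu2),
    second_id Rm ω σm ωs σs lam u α hzig1 (hcross2 u hu1 hu2)⟩

end Stmt5
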